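/- arXiv:1610.07431 — 2 statements merged into one kernel-verified Lean document; each statement's English description precedes it below -/
import Mathlib

section
/- Define f_1(λ) = λ(e^λ - 1)/(e^λ - 1 - λ) for λ > 0. Then f_1 is strictly increasing on (0, ∞). -/
lemma aux_sinh_gt (x : ℝ) (hx : 0 < x) : 2 * x < Real.exp x - Real.exp (-x) := by
  have h : StrictMonoOn (fun t : ℝ => Real.exp t - Real.exp (-t) - 2 * t) (Set.Ici 0) := by
    apply strictMonoOn_of_deriv_pos (convex_Ici 0)
    · fun_prop
    · intro t ht
      rw [interior_Ici] at ht
      have ht' : 0 < t := ht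
      have h1 : HasDerivAt (fun t : ℝ => Real.exp (-t)) (-Real.exp (-t)) t := by
        simpa [Function.comp_def] using (Real.hasDerivAt_exp (-t)).comp t (hasDerivAt_neg t)
      have hd : HasDerivAt (fun t : ℝ => Real.exp t - Real.exp (-t) - 2 * t)
          (Real.exp t - (-Real.exp (-t)) - 2 * 1) t :=
        ((Real.hasDerivAt_exp t).sub h1).sub ((hasDerivAt_id t).const_mul 2)
      rw [hd.deriv]
      have ha : 1 < Real.exp t := by have := Real.add_one_lt_exp (ne_of_gt ht'); linarith
      have hb : Real.exp t * Real.exp (-t) = 1 := by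
        rw [← Real.exp_add]; simp
      nlinarith [Real.exp_pos (-t), sq_nonneg (Real.exp t - 1)]
  have := h (Set.self_mem_Ici) (Set.mem_Ici.mpr hx.le) hx
  simp only [Real.exp_zero, neg_zero, mul_zero] at this
  linarith

lemma aux_key (l : ℝ) (hl : 0 < l) : l ^ 2 * Real.exp l < (Real.exp l - 1) ^ 2 := by
  have h := aux_sinh_gt (l / 2) (by linarith)
  have h1 : Real.exp (l / 2) * Real.exp (l / 2) = Real.exp l := by
    rw [← Real.exp_add]; ring_nf
  have h2 : Real.exp (-(l / 2)) * Real.exp (l / 2) = 1 := by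
    rw [← Real.exp_add]; simp
  have hp := Real.exp_pos (l / 2)
  have hlt : l * Real.exp (l / 2) < Real.exp l - 1 := by nlinarith
  have hpos : 0 < l * Real.exp (l / 2) := by positivity
  nlinarith

theorem stmt_3 :
    StrictMonoOn (fun l : ℝ => l * (Real.exp l - 1) / (Real.exp l - 1 - l))
      (Set.Ioi 0) := by
  apply strictMonoOn_of_deriv_pos (convex_Ioi 0)
  · apply ContinuousOn.div (by fun_prop) (by fun_prop)
    intro l hl
    have := Real.add_one_lt_exp (ne_of_gt (Set.mem_Ioi.mp hl))
    nlinarith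
  · intro l hl
    rw [interior_Ioi] at hl
    have hl' := Set.mem_Ioi.mp hl
    have hD : 0 < Real.exp l - 1 - l := by
      have := Real.add_one_lt_exp (ne_of_gt hl')
      linarith
    have hN : HasDerivAt (fun l : ℝ => l * (Real.exp l - 1))
        (1 * (Real.exp l - 1) + l * Real.exp l) l :=
      (hasDerivAt_id l).mul ((Real.hasDerivAt_exp l).sub_const 1)
    have hDd : HasDerivAt (fun l : ℝ => Real.exp l - 1 - l) (Real.exp l - 1) l := by
      simpa [Pi.sub_def] using ((Real.hasDerivAt_exp l).sub_const 1).sub (hasDerivAt_id l)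
    have hf : HasDerivAt (fun l : ℝ => l * (Real.exp l - 1) / (Real.exp l - 1 - l)) (((1 * (Real.exp l - 1) + l * Real.exp l) * (Real.exp l - 1 - l) - l * (Real.exp l - 1) * (Real.exp l - 1)) / (Real.exp l - 1 - l) ^ 2) l := hN.div hDd (ne_of_gt hD)
    rw [hf.deriv]
    apply div_pos
    · have key := aux_key l hl'
      nlinarith [Real.exp_pos l]
    · positivity
end

section
/- Let k ≥ 3, λ_k the unique positive solution of f_1(λ)=k with f_1(λ)=λ(e^λ-1)/(e^λ-1-λ), ρ_k = k(1-e^{-λ_k})^{k-1}/λ_k and θ_k = 1 - (1-e^{-λ_k})^k. With γ = k/ρ_k and u = (1-θ_k)^{1/k} = 1-e^{-λ_k}, define y_2(θ_k,ρ_k) = (k/γ)(1 - e^{-γ u^{k-1}} - γ u^{k-1} e^{-γ u^{k-1}}). Then y_2(θ_k, ρ_k) = 1 - θ_k. -/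
theorem stmt_16 (k : ℕ) (hk : 3 ≤ k) (lk : ℝ) (hl : 0 < lk)
    (heq : lk * (Real.exp lk - 1) / (Real.exp lk - 1 - lk) = k) :
    let ρk : ℝ := k * (1 - Real.exp (-lk)) ^ (k - 1) / lk
    let θk : ℝ := 1 - (1 - Real.exp (-lk)) ^ k
    let γ : ℝ := k / ρk
    let u : ℝ := (1 - θk) ^ (1 / (k : ℝ))
    (k / γ) * (1 - Real.exp (-(γ * u ^ (k - 1))) -
        γ * u ^ (k - 1) * Real.exp (-(γ * u ^ (k - 1)))) = 1 - θk := by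
  intro ρk θk γ u
  have hk3 : (3:ℝ) ≤ (k:ℝ) := by exact_mod_cast hk
  have hk0 : (0:ℝ) < (k:ℝ) := by linarith
  have ha : 0 < 1 - Real.exp (-lk) := by
    have : Real.exp (-lk) < 1 := Real.exp_lt_one_iff.mpr (by linarith)
    linarith
  set a : ℝ := 1 - Real.exp (-lk) with ha_def
  have hE : 0 < Real.exp lk - 1 - lk := by
    have := Real.add_one_lt_exp hl.ne'
    linarith
  have heq' : lk * (Real.exp lk - 1) = k * (Real.exp lk - 1 - lk) := by
    rw [div_eq_iff hE.ne'] at heq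
    linarith [heq]
  have hθ : 1 - θk = a ^ k := by simp [θk, ha_def]
  have hu : u = a := by
    show ((1:ℝ) - θk) ^ (1 / (k:ℝ)) = a
    rw [hθ, ← Real.rpow_natCast a k, ← Real.rpow_mul ha.le,
      mul_one_div, div_self hk0.ne', Real.rpow_one]
  have hank : a ^ (k-1) ≠ 0 := by positivity
  have hγ : γ = lk / a ^ (k - 1) := by
    show (k:ℝ) / ρk = _
    show (k:ℝ) / ((k:ℝ) * a ^ (k-1) / lk) = _
    field_simp
  have hγu : γ * u ^ (k - 1) = lk := by
    rw [hu, hγ]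
    field_simp
  rw [hγu, hθ, hγ]
  have hkk : k - 1 + 1 = k := Nat.succ_pred_eq_of_pos (lt_of_lt_of_le (by norm_num) hk)
  have hak : a ^ k = a ^ (k - 1) * a := by rw [← pow_succ, hkk]
  have key : (k:ℝ) * (1 - Real.exp (-lk) - lk * Real.exp (-lk)) = lk * a := by
    have hme : Real.exp (-lk) = (Real.exp lk)⁻¹ := Real.exp_neg lk
    have hEp : (0:ℝ) < Real.exp lk := Real.exp_pos lk
    rw [ha_def, hme]
    field_simp
    nlinarith [heq']
  rw [hak]
  rw [div_div_eq_mul_div, div_mul_eq_mul_div, div_eq_iff hl.ne']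
  calc (k:ℝ) * a ^ (k-1) * (1 - Real.exp (-lk) - lk * Real.exp (-lk))
      = a ^ (k-1) * ((k:ℝ) * (1 - Real.exp (-lk) - lk * Real.exp (-lk))) := by ring
    _ = a ^ (k-1) * (lk * a) := by rw [key]
    _ = a ^ (k-1) * a * lk := by ring
end
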